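/- Let M be a simple, cosimple, connected matroid, and let (A,B) be a 2-separation of M. Then (fcl_M(A), B − fcl_M(A)) is a 2-separation of M, where fcl_M(A) is the full closure of A. -/

import Mathlib

open Matroid Set

namespace ExMinors

variable {α β γ : Type}

/-! ### Basic matroid notions -/

/-- The (extended, `ℕ∞`-valued) rank of a set `X` in a matroid `M`: the supremum of the
cardinalities of independent subsets of `X`. -/
noncomputable def eRank (M : Matroid α) (X : Set α) : ℕ∞ :=
  ⨆ I ∈ {I | M.Indep I ∧ I ⊆ X}, I.encard

/-- `(A, B)` is a 2-separation of `M`: a partition of the ground set into two parts of size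
at least two with `r A + r B ≤ r M + 1`. -/
def TwoSep (M : Matroid α) (A B : Set α) : Prop :=
  A ∪ B = M.E ∧ Disjoint A B ∧ 2 ≤ A.encard ∧ 2 ≤ B.encard ∧
    eRank M A + eRank M B ≤ eRank M M.E + 1

/-- `C` is a circuit of `M` : a minimal dependent set. -/
def IsCircuitM (M : Matroid α) (C : Set α) : Prop :=
  C ⊆ M.E ∧ ¬ M.Indep C ∧ ∀ x ∈ C, M.Indep (C \ {x})

/-- A matroid is connected if it is nonempty and every two distinct elements of the
ground set lie on a common circuit. -/
def ConnectedM (M : Matroid α) : Prop :=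
  M.E.Nonempty ∧ ∀ e ∈ M.E, ∀ f ∈ M.E, e = f ∨ ∃ C, IsCircuitM M C ∧ e ∈ C ∧ f ∈ C

/-- A matroid is 3-connected if it is connected and has no 2-separation. -/
def ThreeConnected (M : Matroid α) : Prop :=
  ConnectedM M ∧ ∀ A B, ¬ TwoSep M A B

/-- A matroid is simple if every subset of the ground set with at most two elements
is independent. -/
def SimpleM (M : Matroid α) : Prop :=
  ∀ e ∈ M.E, ∀ f ∈ M.E, M.Indep {e, f}

def CosimpleM (M : Matroid α) : Prop := SimpleM M✶

/-! ### Minors -/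

/-- Deletion of the set `D` from `M`. -/
def del (M : Matroid α) (D : Set α) : Matroid α := M ↾ (M.E \ D)

/-- Contraction of the set `C` in `M`, defined by duality. -/
def con (M : Matroid α) (C : Set α) : Matroid α := (del M✶ C)✶

/-- `N` is a minor of `M`. -/
def IsMinor (N M : Matroid α) : Prop := ∃ C D : Set α, N = del (con M C) D

/-! ### Isomorphism -/

/-- `φ` is an isomorphism from `M` to `N`: a bijection between the ground sets which
preserves independence. -/
def MIsoVia (M : Matroid α) (N : Matroid β) (φ : α → β) : Prop :=
  Set.BijOn φ M.E N.E ∧ ∀ I ⊆ M.E, (M.Indep I ↔ N.Indep (φ '' I))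

/-- `M` and `N` are isomorphic matroids. -/
def MIso (M : Matroid α) (N : Matroid β) : Prop := ∃ φ, MIsoVia M N φ

/-- `φ` is an automorphism of `M`. -/
def IsAuto (M : Matroid α) (φ : α → α) : Prop := MIsoVia M M φ

/-- `M` has a minor isomorphic to the matroid `N`. -/
def HasMinorIso (M : Matroid α) (N : Matroid β) : Prop :=
  ∃ N' : Matroid α, IsMinor N' M ∧ MIso N' N

/-! ### Representations -/

/-- `M` is the matroid on ground set `range g` (with `g` injective) represented by the
family of column vectors `cols`. -/
def ReppedBy {ι F : Type} [Field F] {n : ℕ} (M : Matroid α) (cols : ι → Fin n → F)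
    (g : ι → α) : Prop :=
  Function.Injective g ∧ M.E = Set.range g ∧
    ∀ J : Set ι, (M.Indep (g '' J) ↔ LinearIndependent F (J.restrict cols))

/-- `M` is isomorphic to the matroid of the `k` columns `cols` over the field `F`. -/
def IsColM {F : Type} [Field F] {k n : ℕ} (cols : Fin k → Fin n → F) (M : Matroid α) : Prop :=
  ∃ g : Fin k → α, ReppedBy M cols g

/-- `M` is representable over the field `F` (by vectors in some finite power of `F`). -/
def RepOver (F : Type) [Field F] (M : Matroid α) : Prop :=
  ∃ (n : ℕ) (v : α → Fin n → F), ∀ I ⊆ M.E, (M.Indep I ↔ LinearIndependent F (I.restrict v))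

/-! ### Named matroids -/

/-- `M` is isomorphic to the uniform matroid `U_{m,n}`. -/
def IsUniform (m n : ℕ) (M : Matroid α) : Prop :=
  M.E.Finite ∧ M.E.ncard = n ∧ ∀ I ⊆ M.E, (M.Indep I ↔ I.ncard ≤ m)

/-- The columns of a `GF(2)`-representation of the Fano matroid `F₇`. -/
def fanoCols : Fin 7 → Fin 3 → ZMod 2 :=
  ![![1,0,0], ![0,1,0], ![0,0,1], ![0,1,1], ![1,0,1], ![1,1,0], ![1,1,1]]

/-- `M` is isomorphic to the Fano matroid `F₇`. -/
def IsF7 (M : Matroid α) : Prop := IsColM fanoCols M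

/-- `M` is isomorphic to `F₇*`. -/
def IsF7dual (M : Matroid α) : Prop := IsF7 M✶

/-- The columns of a `GF(3)`-representation of the non-Fano matroid `F₇⁻`. -/
def nonFanoCols : Fin 7 → Fin 3 → ZMod 3 :=
  ![![1,0,0], ![0,1,0], ![0,0,1], ![0,1,1], ![1,0,1], ![1,1,0], ![1,1,1]]

/-- `M` is isomorphic to the non-Fano matroid `F₇⁻`. -/
def IsNonFano (M : Matroid α) : Prop := IsColM nonFanoCols M

/-- `M` is isomorphic to `(F₇⁻)*`. -/
def IsNonFanoDual (M : Matroid α) : Prop := IsNonFano M✶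

/-- The columns `[I₄ | A₈]` of the `GF(3)`-representation of `P₈`. -/
def p8Cols : Fin 8 → Fin 4 → ZMod 3 :=
  ![![1,0,0,0], ![0,1,0,0], ![0,0,1,0], ![0,0,0,1],
    ![0,1,1,-1], ![1,0,1,1], ![1,1,0,1], ![-1,1,1,0]]

/-- `M` is isomorphic to `P₈`. -/
def IsP8 (M : Matroid α) : Prop := IsColM p8Cols M

/-- `M` is isomorphic to `P₆`: rank 3, six elements, whose only non-spanning circuit is a
single 3-point line. -/
def IsP6 (M : Matroid α) : Prop :=
  M.E.Finite ∧ M.E.ncard = 6 ∧ ∃ T ⊆ M.E, T.ncard = 3 ∧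
    ∀ I ⊆ M.E, (M.Indep I ↔ I.ncard ≤ 3 ∧ I ≠ T)

/-- The columns of a `GF(3)`-representation of `AG(2,3)`: the nine points `(1, x, y)`. -/
def ag23Cols : Fin 9 → Fin 3 → ZMod 3 :=
  fun j => ![1, ((j : ℕ) % 3 : ZMod 3), ((j : ℕ) / 3 : ZMod 3)]

/-- `M` is isomorphic to the ternary affine plane `AG(2,3)`. -/
def IsAG23 (M : Matroid α) : Prop := IsColM ag23Cols M

/-- The columns of a `GF(3)`-representation of `AG(2,3)\e` (one point deleted). -/
def agdeCols : Fin 8 → Fin 3 → ZMod 3 :=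
  fun j => ![1, ((j : ℕ) % 3 : ZMod 3), ((j : ℕ) / 3 : ZMod 3)]

/-- `M` is isomorphic to `AG(2,3)\e`. -/
def IsAGde (M : Matroid α) : Prop := IsColM agdeCols M

/-- `M` is isomorphic to `(AG(2,3)\e)*`. -/
def IsAGdeDual (M : Matroid α) : Prop := IsAGde M✶

/-- The columns `[I₄ | A]` of the `GF(3)`-representation of `Δ₃(AG(2,3)\e)`, where `A` has
rows `(1,0,-1,0), (1,0,1,1), (1,1,0,1), (0,1,1,-1)`. -/
def deltaAGCols : Fin 8 → Fin 4 → ZMod 3 :=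
  ![![1,0,0,0], ![0,1,0,0], ![0,0,1,0], ![0,0,0,1],
    ![1,1,1,0], ![0,0,1,1], ![-1,1,0,1], ![0,1,1,-1]]

/-- `M` is isomorphic to `Δ₃(AG(2,3)\e)`. -/
def IsDeltaAG (M : Matroid α) : Prop := IsColM deltaAGCols M

/-- `X` is a circuit-hyperplane of `M`. -/
def IsCircuitHyperplane (M : Matroid α) (X : Set α) : Prop :=
  IsCircuitM M X ∧ M.IsFlat X ∧ eRank M X + 1 = eRank M M.E

/-- `M` is isomorphic to `P₈⁼`, obtained from `P₈` by relaxing its two disjoint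
circuit-hyperplanes. -/
def IsP8eq (M : Matroid α) : Prop :=
  ∃ (N : Matroid α) (X Y : Set α), IsP8 N ∧ N.E = M.E ∧
    IsCircuitHyperplane N X ∧ IsCircuitHyperplane N Y ∧ Disjoint X Y ∧
    ∀ B ⊆ M.E, (M.IsBase B ↔ (N.IsBase B ∨ B = X ∨ B = Y))

/-- `M` is isomorphic to the Steiner-system matroid `S(5,6,12)`: a rank-6 paving matroid on
12 elements whose circuit-hyperplanes are the blocks of an `S(5,6,12)` Steiner system. -/
def IsSteiner (M : Matroid α) : Prop :=
  ∃ Bl : Set (Set α), M.E.Finite ∧ M.E.ncard = 12 ∧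
    (∀ b ∈ Bl, b ⊆ M.E ∧ b.ncard = 6) ∧
    (∀ s ⊆ M.E, s.ncard = 5 → ∃! b, b ∈ Bl ∧ s ⊆ b) ∧
    (∀ I ⊆ M.E, (M.Indep I ↔ I.ncard ≤ 6 ∧ I ∉ Bl))

/-! ### Excluded-minor classes and superfluous subsets -/

/-- The class of (finite) matroids on `ℕ` having no minor isomorphic to `P i` for `i ∈ S`. -/
def ExClass {k : ℕ} (P : Fin k → Matroid ℕ → Prop) (S : Finset (Fin k)) : Set (Matroid ℕ) :=
  {M | M.E.Finite ∧ ∀ i ∈ S, ¬ ∃ N, IsMinor N M ∧ P i N}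

/-- With `P` listing the excluded minors of a class, the subset `E'` of the excluded minors
is superfluous if `ex(E − E') − ex(E)` contains only finitely many 3-connected matroids up
to isomorphism. -/
def Superfluous {k : ℕ} (P : Fin k → Matroid ℕ → Prop) (E' : Finset (Fin k)) : Prop :=
  ∃ L : List (Matroid ℕ),
    ∀ M ∈ ExClass P (Finset.univ \ E') \ ExClass P Finset.univ,
      ThreeConnected M → ∃ N ∈ L, MIso M N

/-! ### Lines, triangles, triads and fans -/

/-- `L` is a 3-point line of `M`: a rank-2 flat with exactly three elements. -/
def IsLine3 (M : Matroid α) (L : Set α) : Prop :=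
  M.IsFlat L ∧ eRank M L = 2 ∧ L.encard = 3

/-- A triangle is a 3-element circuit. -/
def IsTriangle (M : Matroid α) (T : Set α) : Prop := IsCircuitM M T ∧ T.encard = 3

/-- A triad is a 3-element cocircuit. -/
def IsTriad (M : Matroid α) (T : Set α) : Prop := IsCircuitM M✶ T ∧ T.encard = 3

/-- `(x 1, …, x k)` is a fan of `M`: an ordered sequence of distinct elements of the ground
set such that each three consecutive elements form a triangle or a triad, and triangles and
triads alternate. -/
def IsFan (M : Matroid α) (k : ℕ) (x : ℕ → α) : Prop :=
  3 ≤ k ∧ Set.InjOn x (Set.Icc 1 k) ∧ (∀ i, 1 ≤ i → i ≤ k → x i ∈ M.E) ∧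
  ∀ i, 1 ≤ i → i + 2 ≤ k →
    ((IsTriangle M {x i, x (i+1), x (i+2)} ∨ IsTriad M {x i, x (i+1), x (i+2)}) ∧
      (i + 3 ≤ k →
        (IsTriangle M {x i, x (i+1), x (i+2)} → IsTriad M {x (i+1), x (i+2), x (i+3)}) ∧
        (IsTriad M {x i, x (i+1), x (i+2)} → IsTriangle M {x (i+1), x (i+2), x (i+3)})))

/-! ### Full closure -/

/-- The full closure of `X`: the intersection of all sets containing `X` that are closed in
both `M` and `M✶`. -/
def Fcl (M : Matroid α) (X : Set α) : Set α :=
  ⋂₀ {Y | X ⊆ Y ∧ M.closure Y = Y ∧ M✶.closure Y = Y}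

/-! ### Wheels and generalized parallel connections -/

/-- The columns of the standard `ℚ`-representation of the rank-`n` wheel `W_n`:
spoke `i` is `e_i`, and rim element `i` is `e_i - e_{i+1}` (indices mod `n`). -/
noncomputable def wheelCols (n : ℕ) : Fin n ⊕ Fin n → Fin n → ℚ
  | .inl i => Pi.single i 1
  | .inr i => Pi.single i 1 - Pi.single ⟨((i : ℕ) + 1) % n, Nat.mod_lt _ i.pos⟩ 1

/-- `W` is a copy of the rank-`n` wheel, with spokes `s 1, …, s n` and rim elements
`r 1, …, r n`, so that `{s i, r i, s (i+1)}` is a triangle and `{r i, s (i+1), r (i+1)}` is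
a triad (indices mod `n`). -/
def IsWheel (W : Matroid α) (n : ℕ) (s r : ℕ → α) : Prop :=
  ReppedBy W (wheelCols n)
    (Sum.elim (fun i : Fin n => s ((i : ℕ) + 1)) (fun i : Fin n => r ((i : ℕ) + 1)))

/-- `P` is the generalized parallel connection of `W` and `M` (over the common restriction
`W.E ∩ M.E`, assumed to be a modular flat of `W`), characterized by its flats:
`F` is a flat of `P` iff `F ∩ W.E` is a flat of `W` and `F ∩ M.E` is a flat of `M`. -/
def IsGPC (W M P : Matroid α) : Prop :=
  P.E = W.E ∪ M.E ∧ ∀ F ⊆ P.E, (P.IsFlat F ↔ W.IsFlat (F ∩ W.E) ∧ M.IsFlat (F ∩ M.E))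

/-- `L = Λ_T^n(M)` for the triangle `T = {x₁, x₂, x₃}` of `M` : the generalized parallel
connection of the wheel `W_n` with `M`, where `s 1, r n, s n` of `W_n` are relabelled
`x₁, x₂, x₃`, with `x₂` deleted. -/
def IsLambdaExt (M : Matroid α) (x₁ x₂ x₃ : α) (n : ℕ) (L : Matroid α) : Prop :=
  ∃ (W P : Matroid α) (s r : ℕ → α), IsWheel W n s r ∧
    s 1 = x₁ ∧ r n = x₂ ∧ s n = x₃ ∧ W.E ∩ M.E = {x₁, x₂, x₃} ∧
    IsGPC W M P ∧ L = del P {x₂}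

/-- `D = Δ_T(M)`, the `Δ-Y` exchange of `M` on the coindependent triangle
`T = {x₁, x₂, x₃}`: the generalized parallel connection of `M(K₄) = W₃` with `M` across
`T`, with `T` deleted. -/
def IsDeltaY (M : Matroid α) (x₁ x₂ x₃ : α) (D : Matroid α) : Prop :=
  ∃ (W P : Matroid α) (s r : ℕ → α), IsWheel W 3 s r ∧
    s 1 = x₁ ∧ r 3 = x₂ ∧ s 3 = x₃ ∧ W.E ∩ M.E = {x₁, x₂, x₃} ∧
    IsGPC W M P ∧ D = del P {x₁, x₂, x₃}

/-- The columns `[I₃ | A]` of the `GF(3)`-representation of the matroid `M₈`, where `A` has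
rows `(1,1,0,1,0), (1,0,1,1,1), (0,1,1,1,-1)`. -/
def m8Cols : Fin 8 → Fin 3 → ZMod 3 :=
  ![![1,0,0], ![0,1,0], ![0,0,1], ![1,1,0], ![1,0,1], ![0,1,1], ![1,1,1], ![0,1,-1]]


lemma indep_le_eRank {M : Matroid α} {I X : Set α} (hI : M.Indep I) (hIX : I ⊆ X) :
    I.encard ≤ eRank M X :=
  le_iSup₂_of_le I ⟨hI, hIX⟩ le_rfl

lemma eRank_le_of_forall {M : Matroid α} {X : Set α} {c : ℕ∞}
    (h : ∀ I, M.Indep I → I ⊆ X → I.encard ≤ c) : eRank M X ≤ c :=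
  iSup₂_le fun I hI => h I hI.1 hI.2

lemma eRank_eq_of_basis' {M : Matroid α} {I X : Set α} (hI : M.IsBasis' I X) :
    eRank M X = I.encard := by
  refine le_antisymm (eRank_le_of_forall fun J hJ hJX => ?_)
    (indep_le_eRank hI.indep hI.subset)
  obtain ⟨J', hJ', hJJ'⟩ := hJ.subset_isBasis'_of_subset hJX
  exact (encard_mono hJJ').trans (hJ'.encard_eq_encard hI).le

lemma enat_le_of_add_le_add {a b c : ℕ∞} (hc : c ≠ ⊤) (h : a + c ≤ b + c) : a ≤ b :=
  (WithTop.add_le_add_iff_right hc).mp h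

lemma eRank_ground_eq {M : Matroid α} {B : Set α} (hB : M.IsBase B) :
    eRank M M.E = B.encard := by
  refine le_antisymm (eRank_le_of_forall fun J hJ _ => ?_)
    (indep_le_eRank hB.indep hB.subset_ground)
  obtain ⟨B', hB', hJB'⟩ := hJ.exists_isBase_superset
  exact (encard_mono hJB').trans (hB'.encard_eq_encard_of_isBase hB).le

lemma eRank_dual_add {M : Matroid α} (hfin : M.E.Finite) {X : Set α} (hX : X ⊆ M.E) :
    eRank M✶ X + eRank M M.E = X.encard + eRank M (M.E \ X) := by
  obtain ⟨I, hI⟩ := M.exists_isBasis (M.E \ X) diff_subset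
  obtain ⟨B, hB, hIB⟩ := hI.indep.exists_isBase_superset
  have hBdX : B \ X = B ∩ (M.E \ X) := by
    rw [← inter_diff_assoc, inter_eq_self_of_subset_left hB.subset_ground]
  have hBI : B ∩ (M.E \ X) = I :=
    (hI.eq_of_subset_indep (hB.indep.subset inter_subset_left)
      (subset_inter hIB hI.subset) inter_subset_right).symm
  have hdual : eRank M✶ X = (X \ B).encard := by
    refine le_antisymm (eRank_le_of_forall fun J hJ hJX => ?_)
      (indep_le_eRank (hB.compl_isBase_dual.indep.subset (diff_subset_diff_left hX)) diff_subset)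
    obtain ⟨hJE, B', hB', hdisj⟩ := dual_indep_iff_exists'.mp hJ
    refine (encard_mono (subset_diff.mpr ⟨hJX, hdisj⟩)).trans ?_
    have hB'dX : B' \ X = B' ∩ (M.E \ X) := by
      rw [← inter_diff_assoc, inter_eq_self_of_subset_left hB'.subset_ground]
    have h6 : (B' \ X).encard ≤ (B \ X).encard := by
      rw [hB'dX, hBdX, hBI]
      exact (indep_le_eRank (hB'.indep.subset inter_subset_left) inter_subset_right).trans_eq
        (eRank_eq_of_basis' hI.isBasis')
    -- |B∩X| ≤ |B'∩X|
    have e3 : (B \ X).encard + (B ∩ X).encard = B.encard := encard_diff_add_encard_inter B X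
    have e4 : (B' \ X).encard + (B' ∩ X).encard = B'.encard := encard_diff_add_encard_inter B' X
    have e5 : B.encard = B'.encard := hB.encard_eq_encard_of_isBase hB'
    have h7 : (B ∩ X).encard ≤ (B' ∩ X).encard := by
      refine enat_le_of_add_le_add (c := (B \ X).encard)
        (encard_ne_top_iff.mpr (hfin.subset (diff_subset.trans hB.subset_ground))) ?_
      calc (B ∩ X).encard + (B \ X).encard = B.encard := by rw [add_comm]; exact e3
        _ = B'.encard := e5
        _ = (B' \ X).encard + (B' ∩ X).encard := e4.symm
        _ ≤ (B \ X).encard + (B' ∩ X).encard := add_le_add h6 le_rfl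
        _ = (B' ∩ X).encard + (B \ X).encard := add_comm _ _
    have e1 : (X \ B).encard + (X ∩ B).encard = X.encard := encard_diff_add_encard_inter X B
    have e2 : (X \ B').encard + (X ∩ B').encard = X.encard := encard_diff_add_encard_inter X B'
    refine enat_le_of_add_le_add (encard_ne_top_iff.mpr (hfin.subset (inter_subset_left.trans hX)) : (X ∩ B').encard ≠ ⊤) ?_
    calc (X \ B').encard + (X ∩ B').encard = (X \ B).encard + (X ∩ B).encard := by rw [e1, e2]
      _ ≤ (X \ B).encard + (X ∩ B').encard := by
          rw [inter_comm X B, inter_comm X B']; exact add_le_add le_rfl h7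
  calc eRank M✶ X + eRank M M.E = (X \ B).encard + ((B \ X).encard + (B ∩ X).encard) := by
        rw [hdual, eRank_ground_eq hB, encard_diff_add_encard_inter]
    _ = ((X \ B).encard + (X ∩ B).encard) + (B \ X).encard := by rw [inter_comm]; ring
    _ = X.encard + eRank M (M.E \ X) := by
        rw [encard_diff_add_encard_inter, hBdX, hBI, eRank_eq_of_basis' hI.isBasis']

lemma eRank_mono {M : Matroid α} {X Y : Set α} (h : X ⊆ Y) : eRank M X ≤ eRank M Y :=
  eRank_le_of_forall fun _ hI hIX => indep_le_eRank hI (hIX.trans h)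

lemma eRank_indep {M : Matroid α} {I : Set α} (hI : M.Indep I) : eRank M I = I.encard :=
  le_antisymm (eRank_le_of_forall fun _ _ h => encard_mono h) (indep_le_eRank hI le_rfl)

lemma eRank_le_encard (M : Matroid α) (X : Set α) : eRank M X ≤ X.encard :=
  eRank_le_of_forall fun _ _ h => encard_mono h

@[simp] lemma eRank_empty (M : Matroid α) : eRank M (∅ : Set α) = 0 := by
  simpa using eRank_le_encard M ∅

lemma eRank_closure {M : Matroid α} {X : Set α} (hX : X ⊆ M.E) :
    eRank M (M.closure X) = eRank M X := by
  obtain ⟨I, hI⟩ := M.exists_isBasis X hX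
  rw [eRank_eq_of_basis' hI.isBasis', eRank_eq_of_basis' hI.isBasis_closure_right.isBasis']

lemma eRank_ne_top {M : Matroid α} (hfin : M.E.Finite) (X : Set α) : eRank M X ≠ ⊤ := by
  intro h
  have h2 : eRank M X ≤ M.E.encard :=
    eRank_le_of_forall fun I hI _ => encard_mono hI.subset_ground
  rw [h, top_le_iff] at h2
  exact (encard_ne_top_iff.mpr hfin) h2

lemma eRank_submod (M : Matroid α) (X Y : Set α) :
    eRank M (X ∪ Y) + eRank M (X ∩ Y) ≤ eRank M X + eRank M Y := by
  obtain ⟨I, hI⟩ := M.exists_isBasis' (X ∩ Y)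
  obtain ⟨J, hJ, hIJ⟩ := hI.indep.subset_isBasis'_of_subset
    (hI.subset.trans (inter_subset_left.trans subset_union_left))
  rw [eRank_eq_of_basis' hI, eRank_eq_of_basis' hJ]
  have h1 : (J ∩ X).encard + (J ∩ Y).encard
      = ((J ∩ X) ∪ (J ∩ Y)).encard + ((J ∩ X) ∩ (J ∩ Y)).encard :=
    (encard_union_add_encard_inter _ _).symm
  have h2 : (J ∩ X) ∪ (J ∩ Y) = J := by
    rw [← inter_union_distrib_left, inter_eq_self_of_subset_left hJ.subset]
  have h3 : I ⊆ (J ∩ X) ∩ (J ∩ Y) :=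
    subset_inter (subset_inter hIJ (hI.subset.trans inter_subset_left))
      (subset_inter hIJ (hI.subset.trans inter_subset_right))
  calc J.encard + I.encard ≤ ((J ∩ X) ∪ (J ∩ Y)).encard + ((J ∩ X) ∩ (J ∩ Y)).encard := by
        rw [h2]; exact add_le_add le_rfl (encard_mono h3)
    _ = (J ∩ X).encard + (J ∩ Y).encard := h1.symm
    _ ≤ eRank M X + eRank M Y :=
        add_le_add (indep_le_eRank (hJ.indep.subset inter_subset_left) inter_subset_right)
          (indep_le_eRank (hJ.indep.subset inter_subset_left) inter_subset_right)

lemma circuit_encard {M : Matroid α} {C : Set α} (hC : IsCircuitM M C) :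
    eRank M C + 1 = C.encard := by
  obtain ⟨hCE, hdep, hmin⟩ := hC
  have hCne : C.Nonempty := by
    rcases C.eq_empty_or_nonempty with h | h
    · exact absurd (h ▸ M.empty_indep) hdep
    · exact h
  obtain ⟨x, hx⟩ := hCne
  refine le_antisymm ?_ ?_
  · obtain ⟨I, hI⟩ := M.exists_isBasis' C
    rw [eRank_eq_of_basis' hI]
    have hIC : I ⊂ C := hI.subset.ssubset_of_ne (fun h => hdep (h ▸ hI.indep))
    obtain ⟨y, hyC, hyI⟩ := exists_of_ssubset hIC
    calc I.encard + 1 ≤ (C \ {y}).encard + 1 :=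
          add_le_add (encard_mono (subset_diff_singleton hI.subset hyI)) le_rfl
      _ = C.encard := encard_diff_singleton_add_one hyC
  · calc C.encard = (C \ {x}).encard + 1 := (encard_diff_singleton_add_one hx).symm
      _ ≤ eRank M C + 1 := add_le_add (indep_le_eRank (hmin x hx) diff_subset) le_rfl

lemma conn_ineq {M : Matroid α} (hfin : M.E.Finite) (hconn : ConnectedM M) {X Y : Set α}
    (hU : X ∪ Y = M.E) (hD : Disjoint X Y) (hX : X.Nonempty) (hY : Y.Nonempty) :
    eRank M M.E + 1 ≤ eRank M X + eRank M Y := by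
  obtain ⟨e, he⟩ := hX
  obtain ⟨f, hf⟩ := hY
  have hXE : X ⊆ M.E := hU ▸ subset_union_left
  have hYE : Y ⊆ M.E := hU ▸ subset_union_right
  have hef : e ≠ f := fun h => (disjoint_left.mp hD he) (h ▸ hf)
  obtain ⟨C, hC, heC, hfC⟩ := (hconn.2 e (hXE he) f (hYE hf)).resolve_left hef
  have hCE : C ⊆ M.E := hC.1
  have hXC : M.Indep (X ∩ C) := (hC.2.2 f hfC).subset
    (subset_diff_singleton inter_subset_right (fun h => disjoint_left.mp hD h.1 hf))
  have hYC : M.Indep (Y ∩ C) := (hC.2.2 e heC).subset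
    (subset_diff_singleton inter_subset_right (fun h => disjoint_right.mp hD h.1 he))
  have f1 : eRank M (X ∪ C) + (X ∩ C).encard ≤ eRank M X + eRank M C := by
    have h := eRank_submod M X C
    rwa [eRank_indep hXC] at h
  have f2 : eRank M (Y ∪ C) + (Y ∩ C).encard ≤ eRank M Y + eRank M C := by
    have h := eRank_submod M Y C
    rwa [eRank_indep hYC] at h
  have hu : (X ∪ C) ∪ (Y ∪ C) = M.E := by
    apply subset_antisymm
    · exact union_subset (union_subset hXE hCE) (union_subset hYE hCE)
    · rw [← hU]; exact union_subset (subset_union_left.trans subset_union_left)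
        (subset_union_left.trans subset_union_right)
  have hi : (X ∪ C) ∩ (Y ∪ C) = C := by
    ext x
    simp only [mem_inter_iff, mem_union]
    constructor
    · rintro ⟨hx1 | hx1, hx2 | hx2⟩ <;>
        first
          | assumption
          | exact absurd hx2 (disjoint_left.mp hD hx1)
    · exact fun h => ⟨Or.inr h, Or.inr h⟩
  have f3 : eRank M M.E + eRank M C ≤ eRank M (X ∪ C) + eRank M (Y ∪ C) := by
    have h := eRank_submod M (X ∪ C) (Y ∪ C)
    rwa [hu, hi] at h
  have f4 : (X ∩ C).encard + (Y ∩ C).encard = C.encard := by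
    rw [← encard_union_eq (hD.mono inter_subset_left inter_subset_left),
      ← union_inter_distrib_right, hU, inter_eq_self_of_subset_right hCE]
  have f5 : eRank M C + 1 = C.encard := circuit_encard hC
  refine enat_le_of_add_le_add (c := eRank M C + eRank M C)
    (WithTop.add_ne_top.mpr ⟨eRank_ne_top hfin C, eRank_ne_top hfin C⟩) ?_
  calc (eRank M M.E + 1) + (eRank M C + eRank M C)
      = (eRank M M.E + eRank M C) + (eRank M C + 1) := by ring
    _ ≤ (eRank M (X ∪ C) + eRank M (Y ∪ C)) + C.encard := by
        rw [f5]; exact add_le_add f3 le_rfl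
    _ = (eRank M (X ∪ C) + (X ∩ C).encard) + (eRank M (Y ∪ C) + (Y ∩ C).encard) := by
        rw [← f4]; ring
    _ ≤ (eRank M X + eRank M C) + (eRank M Y + eRank M C) := add_le_add f1 f2
    _ = (eRank M X + eRank M Y) + (eRank M C + eRank M C) := by ring

noncomputable def lamr (M : Matroid α) (X : Set α) : ℕ∞ :=
  eRank M X + eRank M (M.E \ X)

lemma lamr_insert_closure_le {M : Matroid α} {X : Set α} {e : α} (hX : X ⊆ M.E)
    (he : e ∈ M.closure X) : lamr M (insert e X) ≤ lamr M X :=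
  add_le_add ((eRank_mono (insert_subset he (M.subset_closure X hX))).trans_eq
      (eRank_closure hX))
    (eRank_mono (diff_subset_diff_right (subset_insert e X)))

lemma eRank_dual_ground {M : Matroid α} (hfin : M.E.Finite) :
    eRank M✶ M.E + eRank M M.E = M.E.encard := by
  have h := eRank_dual_add hfin (Subset.rfl : M.E ⊆ M.E)
  rwa [diff_self, eRank_empty, add_zero] at h

lemma dual_lamr {M : Matroid α} (hfin : M.E.Finite) {X : Set α} (hX : X ⊆ M.E) :
    lamr M✶ X + (eRank M M.E + eRank M M.E) = lamr M X + M.E.encard := by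
  have h1 := eRank_dual_add hfin hX
  have h2 := eRank_dual_add hfin (diff_subset : M.E \ X ⊆ M.E)
  rw [diff_diff_cancel_left hX] at h2
  have hE : M✶.E \ X = M.E \ X := by rw [dual_ground]
  calc lamr M✶ X + (eRank M M.E + eRank M M.E)
      = (eRank M✶ X + eRank M M.E) + (eRank M✶ (M.E \ X) + eRank M M.E) := by
        unfold lamr; rw [hE]; ring
    _ = (X.encard + eRank M (M.E \ X)) + ((M.E \ X).encard + eRank M X) := by rw [h1, h2]
    _ = lamr M X + ((M.E \ X).encard + X.encard) := by unfold lamr; ring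
    _ = lamr M X + M.E.encard := by rw [encard_diff_add_encard_of_subset hX]

lemma lamr_insert_dual_closure_le {M : Matroid α} (hfin : M.E.Finite) {X : Set α} {e : α}
    (hX : X ⊆ M.E) (he : e ∈ M✶.closure X) : lamr M (insert e X) ≤ lamr M X := by
  have heE : e ∈ M.E := dual_ground ▸ (M✶.closure_subset_ground X) he
  have h1 : lamr M✶ (insert e X) ≤ lamr M✶ X :=
    lamr_insert_closure_le (M := M✶) (by rw [dual_ground]; exact hX) he
  have d1 := dual_lamr hfin hX
  have d2 := dual_lamr hfin (insert_subset heE hX)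
  refine enat_le_of_add_le_add (c := M.E.encard) (encard_ne_top_iff.mpr hfin) ?_
  calc lamr M (insert e X) + M.E.encard
      = lamr M✶ (insert e X) + (eRank M M.E + eRank M M.E) := d2.symm
    _ ≤ lamr M✶ X + (eRank M M.E + eRank M M.E) := add_le_add h1 le_rfl
    _ = lamr M X + M.E.encard := d1

lemma conn_ineq_dual {M : Matroid α} (hfin : M.E.Finite) (hconn : ConnectedM M) {X Y : Set α}
    (hU : X ∪ Y = M.E) (hD : Disjoint X Y) (hX : X.Nonempty) (hY : Y.Nonempty) :
    eRank M✶ M✶.E + 1 ≤ eRank M✶ X + eRank M✶ Y := by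
  have hXE : X ⊆ M.E := hU ▸ subset_union_left
  have hYE : Y ⊆ M.E := hU ▸ subset_union_right
  have hYX : Y = M.E \ X := by
    rw [← hU, union_diff_cancel_left (by rw [hD.inter_eq])]
  have hXY : X = M.E \ Y := by
    rw [← hU, union_comm, union_diff_cancel_left (by rw [hD.symm.inter_eq])]
  have hprim := conn_ineq hfin hconn hU hD hX hY
  have d1 := eRank_dual_add hfin hXE
  have d2 := eRank_dual_add hfin hYE
  rw [← hYX] at d1
  rw [← hXY] at d2
  have dE := eRank_dual_ground hfin
  have hcard : X.encard + Y.encard = M.E.encard := by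
    rw [← encard_union_eq hD, hU]
  rw [dual_ground]
  refine enat_le_of_add_le_add (c := eRank M M.E + eRank M M.E)
    (WithTop.add_ne_top.mpr ⟨eRank_ne_top hfin _, eRank_ne_top hfin _⟩) ?_
  calc (eRank M✶ M.E + 1) + (eRank M M.E + eRank M M.E)
      = (eRank M✶ M.E + eRank M M.E) + (eRank M M.E + 1) := by ring
    _ = M.E.encard + (eRank M M.E + 1) := by rw [dE]
    _ ≤ M.E.encard + (eRank M X + eRank M Y) := add_le_add le_rfl hprim
    _ = (X.encard + eRank M Y) + (Y.encard + eRank M X) := by rw [← hcard]; ring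
    _ = (eRank M✶ X + eRank M M.E) + (eRank M✶ Y + eRank M M.E) := by rw [d1, d2]
    _ = (eRank M✶ X + eRank M✶ Y) + (eRank M M.E + eRank M M.E) := by ring

lemma absorb_aux {N : Matroid α} (hfin : N.E.Finite)
    (hconn2 : ∀ X Y : Set α, X ∪ Y = N.E → Disjoint X Y → X.Nonempty → Y.Nonempty →
      eRank N N.E + 1 ≤ eRank N X + eRank N Y)
    (hsimp : ∀ e ∈ N.E, ∀ f ∈ N.E, N.Indep {e, f})
    {X : Set α} {f g : α} (hX : X ⊆ N.E) (hne : X.Nonempty) (hcompl : N.E \ X = {f, g})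
    (hfg : f ≠ g) (hlam : lamr N X ≤ eRank N N.E + 1) (hf : f ∈ N.closure X) : False := by
  have hfE : f ∈ N.E := (N.closure_subset_ground X) hf
  have hgEX : g ∈ N.E \ X := hcompl ▸ (by simp)
  have hX'E : insert f X ∪ {g} = N.E := by
    apply subset_antisymm
    · exact union_subset (insert_subset hfE hX) (singleton_subset_iff.mpr hgEX.1)
    · intro x hx
      by_cases hxX : x ∈ X
      · exact Or.inl (Or.inr hxX)
      · have : x ∈ ({f, g} : Set α) := hcompl ▸ ⟨hx, hxX⟩
        rcases this with h | h
        · exact Or.inl (Or.inl h)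
        · exact Or.inr h
  have hfX : f ∉ X := by
    have : f ∈ N.E \ X := hcompl ▸ (by simp)
    exact this.2
  have hdisj : Disjoint (insert f X) {g} := by
    rw [disjoint_singleton_right]
    rintro (h | h)
    · exact hfg h.symm
    · exact hgEX.2 h
  have hkey := hconn2 (insert f X) {g} hX'E hdisj (insert_nonempty f X) (singleton_nonempty g)
  have hrX' : eRank N (insert f X) ≤ eRank N X :=
    (eRank_mono (insert_subset hf (N.subset_closure X hX))).trans_eq (eRank_closure hX)
  have hrg : eRank N {g} ≤ 1 := (eRank_le_encard N {g}).trans_eq (encard_singleton g)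
  have h1 : eRank N N.E + 1 ≤ eRank N X + 1 :=
    hkey.trans (add_le_add hrX' hrg)
  have h2 : eRank N N.E ≤ eRank N X :=
    enat_le_of_add_le_add (c := 1) (by simp) h1
  have h3 : eRank N (N.E \ X) ≤ 1 := by
    have h4 : eRank N X + eRank N (N.E \ X) ≤ eRank N X + 1 :=
      hlam.trans ((add_le_add h2 le_rfl).trans_eq (by ring))
    exact (WithTop.add_le_add_iff_left (eRank_ne_top hfin X)).mp h4
  have hpair : N.Indep {f, g} := hsimp f hfE g hgEX.1
  have hcon : (2 : ℕ∞) ≤ 1 := by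
    calc (2 : ℕ∞) = ({f, g} : Set α).encard := (encard_pair hfg).symm
      _ ≤ eRank N (N.E \ X) := by rw [hcompl]; exact indep_le_eRank hpair Subset.rfl
      _ ≤ 1 := h3
  norm_num at hcon

lemma no_absorb {M : Matroid α} (hfin : M.E.Finite) (hconn : ConnectedM M)
    (hs : SimpleM M) (hcs : CosimpleM M) {X : Set α} {f g : α} (hX : X ⊆ M.E)
    (hne : X.Nonempty) (hcompl : M.E \ X = {f, g}) (hfg : f ≠ g)
    (hlam : lamr M X ≤ eRank M M.E + 1)
    (hf : f ∈ M.closure X ∪ M✶.closure X) : False := by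
  rcases hf with hf | hf
  · exact absorb_aux hfin (fun X Y h1 h2 h3 h4 => conn_ineq hfin hconn h1 h2 h3 h4) hs
      hX hne hcompl hfg hlam hf
  · have hfin' : M✶.E.Finite := by rwa [dual_ground]
    have hconn2 : ∀ X Y : Set α, X ∪ Y = M✶.E → Disjoint X Y → X.Nonempty → Y.Nonempty →
        eRank M✶ M✶.E + 1 ≤ eRank M✶ X + eRank M✶ Y := by
      intro X Y h1 h2 h3 h4
      exact conn_ineq_dual hfin hconn (by rwa [dual_ground] at h1) h2 h3 h4
    have hlam' : lamr M✶ X ≤ eRank M✶ M✶.E + 1 := by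
      refine enat_le_of_add_le_add (c := eRank M M.E + eRank M M.E)
        (WithTop.add_ne_top.mpr ⟨eRank_ne_top hfin _, eRank_ne_top hfin _⟩) ?_
      calc lamr M✶ X + (eRank M M.E + eRank M M.E) = lamr M X + M.E.encard :=
            dual_lamr hfin hX
        _ ≤ (eRank M M.E + 1) + M.E.encard := add_le_add hlam le_rfl
        _ = (eRank M✶ M.E + eRank M M.E) + (eRank M M.E + 1) := by
            rw [eRank_dual_ground hfin]; ring
        _ = (eRank M✶ M✶.E + 1) + (eRank M M.E + eRank M M.E) := by rw [dual_ground]; ring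
    exact absorb_aux hfin' hconn2 hcs (by rwa [dual_ground]) hne
      (by rwa [dual_ground]) hfg hlam' hf

open Classical in
noncomputable def fStep (M : Matroid α) (X : Set α) : Set α :=
  if h : ((M.closure X ∪ M✶.closure X) \ X).Nonempty then insert h.some X else X

lemma subset_fStep (M : Matroid α) (X : Set α) : X ⊆ fStep M X := by
  unfold fStep; split_ifs with h
  · exact subset_insert _ _
  · exact Subset.rfl

lemma fStep_eq_or (M : Matroid α) (X : Set α) :
    fStep M X = X ∨ ∃ e ∈ (M.closure X ∪ M✶.closure X) \ X, fStep M X = insert e X := by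
  unfold fStep; split_ifs with h
  · exact Or.inr ⟨h.some, h.some_mem, rfl⟩
  · exact Or.inl rfl

lemma fStep_fixed {M : Matroid α} {X : Set α} (h : fStep M X = X) (hX : X ⊆ M.E) :
    M.closure X = X ∧ M✶.closure X = X := by
  unfold fStep at h
  split_ifs at h with hne
  · exact absurd (insert_eq_self.mp h) hne.some_mem.2
  · have hsub : (M.closure X ∪ M✶.closure X) ⊆ X :=
      diff_eq_empty.mp (not_nonempty_iff_eq_empty.mp hne)
    exact ⟨subset_antisymm (subset_union_left.trans hsub) (M.subset_closure X hX),
      subset_antisymm (subset_union_right.trans hsub)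
        (M✶.subset_closure X (by rwa [dual_ground]))⟩

lemma Fcl_subset_ground (M : Matroid α) {A : Set α} (hA : A ⊆ M.E) : Fcl M A ⊆ M.E :=
  sInter_subset_of_mem ⟨hA, M.closure_ground, by rw [← dual_ground]; exact M✶.closure_ground⟩

lemma subset_Fcl (M : Matroid α) (A : Set α) : A ⊆ Fcl M A :=
  subset_sInter fun _ hY => hY.1

lemma Fcl_closure {M : Matroid α} {A : Set α} (hA : A ⊆ M.E) :
    M.closure (Fcl M A) = Fcl M A ∧ M✶.closure (Fcl M A) = Fcl M A := by
  have hsub : Fcl M A ⊆ M.E := Fcl_subset_ground M hA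
  constructor
  · refine subset_antisymm (subset_sInter fun Y hY => ?_) (M.subset_closure _ hsub)
    exact (M.closure_subset_closure (sInter_subset_of_mem hY)).trans hY.2.1.subset
  · refine subset_antisymm (subset_sInter fun Y hY => ?_)
      (M✶.subset_closure _ (by rwa [dual_ground]))
    exact (M✶.closure_subset_closure (sInter_subset_of_mem hY)).trans hY.2.2.subset


theorem statement14' {α : Type} (M : Matroid α) (hfin : M.E.Finite) (hs : SimpleM M)
    (hcs : CosimpleM M) (hconn : ConnectedM M) (A B : Set α)
    (hAB : A ∪ B = M.E ∧ Disjoint A B ∧ 2 ≤ A.encard ∧ 2 ≤ B.encard ∧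
      eRank M A + eRank M B ≤ eRank M M.E + 1) :
    Fcl M A ∪ (B \ Fcl M A) = M.E ∧ Disjoint (Fcl M A) (B \ Fcl M A) ∧
      2 ≤ (Fcl M A).encard ∧ 2 ≤ (B \ Fcl M A).encard ∧
      eRank M (Fcl M A) + eRank M (B \ Fcl M A) ≤ eRank M M.E + 1 := by
  obtain ⟨hUn, hDj, hA2, hB2, hr⟩ := hAB
  have hAE : A ⊆ M.E := hUn ▸ subset_union_left
  have hBE : B ⊆ M.E := hUn ▸ subset_union_right
  have hBA : B = M.E \ A := by rw [← hUn, union_diff_cancel_left (by rw [hDj.inter_eq])]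
  have hAne : A.Nonempty := by
    rw [← encard_pos]; exact lt_of_lt_of_le (by norm_num) hA2
  have hlamA : lamr M A ≤ eRank M M.E + 1 := by unfold lamr; rwa [← hBA]
  have hFsub : Fcl M A ⊆ M.E := Fcl_subset_ground M hAE
  have hAF : A ⊆ Fcl M A := subset_Fcl M A
  obtain ⟨hFcl1, hFcl2⟩ := Fcl_closure (M := M) hAE
  set F : ℕ → Set α := fun n => (fStep M)^[n] A with hF
  have hFsucc : ∀ n, F (n + 1) = fStep M (F n) := fun n => Function.iterate_succ_apply' _ _ _
  have hF0 : F 0 = A := rfl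
  have hinv : ∀ n, A ⊆ F n ∧ F n ⊆ Fcl M A ∧ lamr M (F n) ≤ eRank M M.E + 1 ∧
      2 ≤ (M.E \ F n).encard := by
    intro n
    induction n with
    | zero => exact ⟨hF0 ▸ Subset.rfl, hF0 ▸ hAF, hF0 ▸ hlamA, by rw [hF0, ← hBA]; exact hB2⟩
    | succ n ih =>
      obtain ⟨ih0, ih1, ih2, ih3⟩ := ih
      have hXE : F n ⊆ M.E := ih1.trans hFsub
      rw [hFsucc n]
      rcases fStep_eq_or M (F n) with heq | ⟨e, he, heq⟩
      · rw [heq]; exact ⟨ih0, ih1, ih2, ih3⟩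
      · rw [heq]
        have heE : e ∈ M.E := by
          rcases he.1 with h | h
          · exact M.closure_subset_ground _ h
          · exact dual_ground ▸ M✶.closure_subset_ground _ h
        have hsub : insert e (F n) ⊆ Fcl M A := by
          refine insert_subset ?_ ih1
          rcases he.1 with h | h
          · exact hFcl1 ▸ (M.closure_subset_closure ih1) h
          · exact hFcl2 ▸ (M✶.closure_subset_closure ih1) h
        have hlam' : lamr M (insert e (F n)) ≤ eRank M M.E + 1 := by
          rcases he.1 with h | h
          · exact (lamr_insert_closure_le hXE h).trans ih2
          · exact (lamr_insert_dual_closure_le hfin hXE h).trans ih2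
        refine ⟨ih0.trans (subset_insert e (F n)), hsub, hlam', ?_⟩
        rcases ih3.lt_or_eq with hlt | heqc
        · have heIn : e ∈ M.E \ F n := ⟨heE, he.2⟩
          have hdd : M.E \ insert e (F n) = (M.E \ F n) \ {e} := by
            rw [diff_diff, union_singleton]
          have hcard : ((M.E \ F n) \ {e}).encard + 1 = (M.E \ F n).encard :=
            encard_diff_singleton_add_one heIn
          rw [hdd]
          refine enat_le_of_add_le_add (c := 1) (by simp) ?_
          rw [hcard]
          exact (ENat.add_one_le_iff (by norm_num)).mpr hlt
        · exfalso
          obtain ⟨f, g, hfg, hpair⟩ := encard_eq_two.mp heqc.symm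
          have hXne : (F n).Nonempty := hAne.mono ih0
          have heIn : e ∈ ({f, g} : Set α) := hpair ▸ ⟨heE, he.2⟩
          rcases heIn with rfl | rfl
          · exact no_absorb hfin hconn hs hcs hXE hXne hpair hfg ih2 he.1
          · exact no_absorb hfin hconn hs hcs hXE hXne (by rw [hpair, pair_comm]) hfg.symm
              ih2 he.1
  have hstab : ∃ n, fStep M (F n) = F n := by
    by_contra hcon
    push_neg at hcon
    have hss : ∀ n, (F n).ncard < (F (n + 1)).ncard := by
      intro n
      have h1 : F n ⊆ F (n + 1) := hFsucc n ▸ subset_fStep M (F n)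
      have hne2 : F n ≠ F (n + 1) := fun h => hcon n (by rw [hFsucc n] at h; exact h.symm)
      exact ncard_lt_ncard (ssubset_of_subset_of_ne h1 hne2)
        (hfin.subset ((hinv (n + 1)).2.1.trans hFsub))
    have hgrow : ∀ n, n ≤ (F n).ncard := by
      intro n
      induction n with
      | zero => exact Nat.zero_le _
      | succ n ih => exact Nat.succ_le_of_lt (lt_of_le_of_lt ih (hss n))
    have h1 := hgrow (M.E.ncard + 1)
    have h2 := ncard_le_ncard ((hinv (M.E.ncard + 1)).2.1.trans hFsub) hfin
    omega
  obtain ⟨n, hn⟩ := hstab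
  obtain ⟨hAFn, hsubF, hlamF, hcardF⟩ := hinv n
  have hXE : F n ⊆ M.E := hsubF.trans hFsub
  obtain ⟨hc1, hc2⟩ := fStep_fixed hn hXE
  have hGF : Fcl M A = F n := subset_antisymm (sInter_subset_of_mem ⟨hAFn, hc1, hc2⟩) hsubF
  have hEdiff : M.E \ Fcl M A = B \ Fcl M A := by
    rw [← hUn]
    ext x
    simp only [mem_diff, mem_union]
    constructor
    · rintro ⟨hx | hx, hxF⟩
      · exact absurd (hAF hx) hxF
      · exact ⟨hx, hxF⟩
    · rintro ⟨hx, hxF⟩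
      exact ⟨Or.inr hx, hxF⟩
  refine ⟨?_, disjoint_sdiff_right, hA2.trans (encard_mono hAF), ?_, ?_⟩
  · apply subset_antisymm
    · exact union_subset hFsub (diff_subset.trans hBE)
    · rw [← hEdiff, union_diff_cancel hFsub]
  · rw [← hEdiff, hGF]; exact hcardF
  · have h3 : lamr M (Fcl M A) ≤ eRank M M.E + 1 := hGF ▸ hlamF
    unfold lamr at h3
    rwa [hEdiff] at h3


/-- If `M` is a simple, cosimple, connected matroid and `(A, B)` is a 2-separation of `M`,
then `(fcl_M(A), B − fcl_M(A))` is a 2-separation of `M`. -/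
theorem statement14 {α : Type} (M : Matroid α) (hfin : M.E.Finite) (hs : SimpleM M) (hcs : CosimpleM M)
    (hconn : ConnectedM M) (A B : Set α) (hAB : TwoSep M A B) :
    TwoSep M (Fcl M A) (B \ Fcl M A) := by
  exact statement14' M hfin hs hcs hconn A B hAB

end ExMinors
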